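/- Fix ν ∈ [0,1), α > 0, ρ ∈ (0,1) and J ∈ ℤ_{>0}. For every u > 0 and T > 0 there exist constants C < ∞ and ε₀ ∈ (0,1] such that for every ε ∈ (0,ε₀] and every t ∈ ℕ with t ≤ ε^{−3}T, the t-fold convolution P_ε^t of the time-inhomogeneous tilted step distributions satisfies Σ_{n∈ℕ} P_ε^t(n) · e^{u ε |n − M_ε(t)|} ≤ C, where M_ε(t) = Σ_{n∈ℕ} n·P_ε^t(n) is the mean of P_ε^t. -/

import Mathlib

/-- The step distribution with parameters `(q, ᾱ, ν)`:
`p(0) = 1 − ᾱ(1−q)/(1+ᾱ)` and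
`p(n) = (ᾱ(1−q)(1−ν)/(1+ᾱ)²)·((ν+ᾱ)/(1+ᾱ))^{n−1}` for `n ≥ 1`. -/
noncomputable def stepDist (q a ν : ℝ) : ℕ → ℝ := fun n =>
  if n = 0 then 1 - a * (1 - q) / (1 + a)
  else (a * (1 - q) * (1 - ν) / (1 + a) ^ 2) * ((ν + a) / (1 + a)) ^ (n - 1)

/-- The tilted step distribution with parameters `(q, ᾱ, ν, ρ)`:
`f(n) = λ ρ^n p(n)` where `γ = (1−ρ)/(1−νρ)` and `λ = (1+ᾱγ)/(1+qᾱγ)`. -/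
noncomputable def tiltedStepDist (q a ν ρ : ℝ) : ℕ → ℝ := fun n =>
  ((1 + a * ((1 - ρ) / (1 - ν * ρ))) / (1 + q * a * ((1 - ρ) / (1 - ν * ρ)))) *
    ρ ^ n * stepDist q a ν n

/-- Convolution of two mass functions on `ℕ`: `(g*h)(n) = ∑_{m=0}^{n} g(m) h(n−m)`. -/
noncomputable def pmfConv (g h : ℕ → ℝ) : ℕ → ℝ := fun n =>
  ∑ m ∈ Finset.range (n + 1), g m * h (n - m)

/-- The `t`-fold convolution `P_ε^t = f_ε^{(0)} * ⋯ * f_ε^{(t−1)}` of the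
time-inhomogeneous tilted step distributions, where `f_ε^{(s)}` is the tilted step
distribution with parameters `(e^{−ε}, α e^{−ε·(s mod J)}, ν, ρ)`. -/
noncomputable def tiltedConvIter (ν α ρ ε : ℝ) (J : ℕ) : ℕ → ℕ → ℝ
  | 0 => fun n => if n = 0 then 1 else 0
  | t + 1 => pmfConv (tiltedConvIter ν α ρ ε J t)
      (tiltedStepDist (Real.exp (-ε)) (α * Real.exp (-ε * ((t % J : ℕ) : ℝ))) ν ρ)

lemma tilted_nonneg {q a ν ρ : ℝ} (hq0 : 0 < q) (hq1 : q ≤ 1) (ha : 0 < a)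
    (hν0 : 0 ≤ ν) (hν1 : ν < 1) (hρ0 : 0 < ρ) (hρ1 : ρ < 1) (n : ℕ) :
    0 ≤ tiltedStepDist q a ν ρ n := by
  have hνρ : 0 < 1 - ν * ρ := by nlinarith
  have hγ0 : 0 ≤ (1 - ρ) / (1 - ν * ρ) := div_nonneg (by linarith) hνρ.le
  have hlam : 0 ≤ (1 + a * ((1 - ρ) / (1 - ν * ρ))) / (1 + q * a * ((1 - ρ) / (1 - ν * ρ))) := by
    positivity
  have hstep : 0 ≤ stepDist q a ν n := by
    unfold stepDist
    split
    · have h1a : (0:ℝ) < 1 + a := by linarith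
      have : a * (1 - q) / (1 + a) ≤ 1 := by
        rw [div_le_one h1a]; nlinarith
      linarith
    · have h1 : 0 ≤ a * (1 - q) * (1 - ν) / (1 + a) ^ 2 :=
        div_nonneg (mul_nonneg (mul_nonneg ha.le (by linarith)) (by linarith)) (by positivity)
      have h2 : 0 ≤ ((ν + a) / (1 + a)) ^ (n - 1) :=
        pow_nonneg (div_nonneg (by linarith) (by linarith)) _
      exact mul_nonneg h1 h2
  unfold tiltedStepDist
  have : 0 ≤ ρ ^ n := by positivity
  exact mul_nonneg (mul_nonneg hlam this) hstep

set_option maxHeartbeats 2000000 in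
lemma tilted_beta {q a ν ρ : ℝ} (hq0 : 0 < q) (hq1 : q ≤ 1) (ha : 0 < a)
    (hν0 : 0 ≤ ν) (hν1 : ν < 1) (hρ0 : 0 < ρ) (hρ1 : ρ < 1) :
    ∃ β : ℝ, 0 ≤ β ∧ β ≤ (1 + a) * (a * (1 - q)) * ρ / (1 - ρ * ((ν + a) / (1 + a))) ∧
      ∀ x : ℝ, 0 < x → ρ * ((ν + a) / (1 + a)) * x < 1 →
        Summable (fun n : ℕ => tiltedStepDist q a ν ρ n * x ^ n) ∧
        ∑' n : ℕ, tiltedStepDist q a ν ρ n * x ^ n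
          = 1 + β * (x - 1) / (1 - ρ * ((ν + a) / (1 + a)) * x) := by
  have h1a : (0:ℝ) < 1 + a := by linarith
  have hνρ : 0 < 1 - ν * ρ := by nlinarith
  set γ : ℝ := (1 - ρ) / (1 - ν * ρ) with hγ
  have hγ0 : 0 ≤ γ := div_nonneg (by linarith) hνρ.le
  have hγ1 : γ ≤ 1 := by
    rw [hγ, div_le_one hνρ]; nlinarith
  have hden : (0:ℝ) < 1 + q * a * γ := by positivity
  set lam : ℝ := (1 + a * γ) / (1 + q * a * γ) with hlam
  have hlam0 : 0 ≤ lam := by positivity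
  have hlam_le : lam ≤ 1 + a := by
    rw [hlam, div_le_iff₀ hden]
    have : q * a * γ ≥ 0 := by positivity
    nlinarith
  set r : ℝ := (ν + a) / (1 + a) with hr
  have hr0 : 0 ≤ r := div_nonneg (by linarith) h1a.le
  have hr1 : r < 1 := by
    rw [hr, div_lt_one h1a]; linarith
  set η : ℝ := ρ * r with hη
  have hη0 : 0 ≤ η := by positivity
  have hη1 : η < 1 := by
    calc η = ρ * r := hη
    _ < 1 * 1 := by
        rcases eq_or_lt_of_le hr0 with h | h
        · rw [hη] at *; nlinarith
        · exact mul_lt_mul' hρ1.le hr1 hr0 (by linarith)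
    _ = 1 := by ring
  set c : ℝ := a * (1 - q) * (1 - ν) / (1 + a) ^ 2 with hc
  have h1q : 0 ≤ 1 - q := by linarith
  have hc0 : 0 ≤ c := div_nonneg (mul_nonneg (mul_nonneg ha.le h1q) (by linarith)) (by positivity)
  have hc_le : c ≤ a * (1 - q) := by
    rw [hc, div_le_iff₀ (by positivity)]
    have h1 : (1:ℝ) ≤ (1 + a) ^ 2 := by nlinarith
    have h2 : 0 ≤ a * (1 - q) := mul_nonneg ha.le h1q
    nlinarith
  refine ⟨lam * c * ρ / (1 - η),
    div_nonneg (mul_nonneg (mul_nonneg hlam0 hc0) hρ0.le) (by linarith), ?_, ?_⟩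
  · have hnum : lam * c * ρ ≤ (1 + a) * (a * (1 - q)) * ρ :=
      mul_le_mul_of_nonneg_right (mul_le_mul hlam_le hc_le hc0 (by linarith)) hρ0.le
    have hd : (0:ℝ) < 1 - η := by linarith
    exact (div_le_div_iff_of_pos_right hd).mpr hnum
  · intro x hx hηx
    have hηx0 : 0 ≤ η * x := mul_nonneg hη0 hx.le
    have hgeo : Summable (fun k : ℕ => (lam * c * ρ * x) * (η * x) ^ k) :=
      (summable_geometric_of_lt_one hηx0 hηx).mul_left _
    have hterm : ∀ k : ℕ, tiltedStepDist q a ν ρ (k + 1) * x ^ (k + 1)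
        = (lam * c * ρ * x) * (η * x) ^ k := by
      intro k
      simp only [tiltedStepDist, stepDist, Nat.succ_ne_zero, if_false, Nat.add_sub_cancel]
      simp only [hlam, hc, hη, hr, hγ]
      rw [pow_succ ρ, pow_succ x, mul_pow, mul_pow]
      ring
    have heq : (fun k : ℕ => tiltedStepDist q a ν ρ (k + 1) * x ^ (k + 1))
        = fun k : ℕ => (lam * c * ρ * x) * (η * x) ^ k := funext hterm
    have hsum : Summable (fun n : ℕ => tiltedStepDist q a ν ρ n * x ^ n) :=
      (summable_nat_add_iff 1).mp (heq ▸ hgeo)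
    refine ⟨hsum, ?_⟩
    have htail : ∑' k : ℕ, tiltedStepDist q a ν ρ (k + 1) * x ^ (k + 1)
        = lam * c * ρ * x * (1 - η * x)⁻¹ := by
      calc ∑' k : ℕ, tiltedStepDist q a ν ρ (k + 1) * x ^ (k + 1)
          = ∑' k : ℕ, (lam * c * ρ * x) * (η * x) ^ k := tsum_congr hterm
        _ = (lam * c * ρ * x) * ∑' k : ℕ, (η * x) ^ k := tsum_mul_left
        _ = lam * c * ρ * x * (1 - η * x)⁻¹ := by
            rw [tsum_geometric_of_lt_one hηx0 hηx]
    rw [Summable.tsum_eq_zero_add hsum, htail]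
    have hη1' : (0:ℝ) < 1 - η := by linarith
    have hηx1 : (0:ℝ) < 1 - η * x := by linarith
    have hA : (1 - ν * ρ) + q * a * (1 - ρ) ≠ 0 := by
      have : 0 ≤ q * a * (1 - ρ) := mul_nonneg (mul_nonneg hq0.le ha.le) (by linarith)
      nlinarith
    have hB : (1 + a) - ρ * (ν + a) ≠ 0 := by nlinarith
    have hmass : lam * (1 - a * (1 - q) / (1 + a)) + lam * c * ρ * (1 - η)⁻¹ = 1 := by
      have e1 : lam = ((1 - ν * ρ) + a * (1 - ρ)) / ((1 - ν * ρ) + q * a * (1 - ρ)) := by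
        rw [hlam, div_eq_div_iff hden.ne' hA, hγ]
        linear_combination (a - q * a) * div_mul_cancel₀ (1 - ρ) hνρ.ne'
      have e2 : (1 - η)⁻¹ = (1 + a) / ((1 + a) - ρ * (ν + a)) := by
        rw [hη, hr, ← inv_div]; congr 1; field_simp
      rw [e1, e2, hc]
      generalize hD : (1 - ν * ρ) + q * a * (1 - ρ) = D at *
      field_simp
      rw [← hD]
      ring
    have hf0 : tiltedStepDist q a ν ρ 0 * x ^ 0 = lam * (1 - a * (1 - q) / (1 + a)) := by
      simp [tiltedStepDist, stepDist, hlam, hγ]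
    rw [hf0]
    have h4 : (1 - η) ≠ 0 := hη1'.ne'
    have h5 : (1 - η * x) ≠ 0 := hηx1.ne'
    have hrw : lam * (1 - a * (1 - q) / (1 + a)) = 1 - lam * c * ρ * (1 - η)⁻¹ := by
      linarith
    rw [hrw]
    field_simp
    ring


lemma tilted_pos0 {q a ν ρ : ℝ} (hq0 : 0 < q) (hq1 : q ≤ 1) (ha : 0 < a)
    (hν0 : 0 ≤ ν) (hν1 : ν < 1) (hρ0 : 0 < ρ) (hρ1 : ρ < 1) :
    0 < tiltedStepDist q a ν ρ 0 := by
  have hνρ : 0 < 1 - ν * ρ := by nlinarith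
  have hγ0 : 0 ≤ (1 - ρ) / (1 - ν * ρ) := div_nonneg (by linarith) hνρ.le
  have hlam : 0 < (1 + a * ((1 - ρ) / (1 - ν * ρ))) / (1 + q * a * ((1 - ρ) / (1 - ν * ρ))) := by
    apply div_pos
    · nlinarith [mul_nonneg ha.le hγ0]
    · nlinarith [mul_nonneg (mul_nonneg hq0.le ha.le) hγ0]
  have h1a : (0:ℝ) < 1 + a := by linarith
  have hp0 : 0 < 1 - a * (1 - q) / (1 + a) := by
    have h2 : a * (1 - q) / (1 + a) < 1 := by
      rw [div_lt_one h1a]; nlinarith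
    linarith
  have he : tiltedStepDist q a ν ρ 0
      = ((1 + a * ((1 - ρ) / (1 - ν * ρ))) / (1 + q * a * ((1 - ρ) / (1 - ν * ρ))))
        * (1 - a * (1 - q) / (1 + a)) := by
    simp [tiltedStepDist, stepDist]
  rw [he]
  exact mul_pos hlam hp0

lemma pmfConv_nonneg {g h : ℕ → ℝ} (hg : ∀ n, 0 ≤ g n) (hh : ∀ n, 0 ≤ h n) (n : ℕ) :
    0 ≤ pmfConv g h n :=
  Finset.sum_nonneg fun m _ => mul_nonneg (hg m) (hh (n - m))

lemma pmfConv_tsum {g h : ℕ → ℝ} {x : ℝ} (hx : 0 ≤ x)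
    (hg : ∀ n, 0 ≤ g n) (hh : ∀ n, 0 ≤ h n)
    (hgs : Summable fun n => g n * x ^ n) (hhs : Summable fun n => h n * x ^ n) :
    Summable (fun n => pmfConv g h n * x ^ n) ∧
      ∑' n : ℕ, pmfConv g h n * x ^ n = (∑' n : ℕ, g n * x ^ n) * (∑' n : ℕ, h n * x ^ n) := by
  have hgn : ∀ n, 0 ≤ g n * x ^ n := fun n => mul_nonneg (hg n) (pow_nonneg hx n)
  have hhn : ∀ n, 0 ≤ h n * x ^ n := fun n => mul_nonneg (hh n) (pow_nonneg hx n)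
  have hgnorm : Summable fun n => ‖g n * x ^ n‖ := by
    simpa only [Real.norm_eq_abs] using summable_abs_iff.mpr hgs
  have hhnorm : Summable fun n => ‖h n * x ^ n‖ := by
    simpa only [Real.norm_eq_abs] using summable_abs_iff.mpr hhs
  have key : ∀ n : ℕ, (∑ k ∈ Finset.range (n + 1), (g k * x ^ k) * (h (n - k) * x ^ (n - k)))
      = pmfConv g h n * x ^ n := by
    intro n
    rw [pmfConv, Finset.sum_mul]
    refine Finset.sum_congr rfl fun k hk => ?_
    have hkn : k ≤ n := Nat.lt_succ_iff.mp (Finset.mem_range.mp hk)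
    have hxx : x ^ k * x ^ (n - k) = x ^ n := by
      rw [← pow_add, Nat.add_sub_cancel' hkn]
    calc g k * x ^ k * (h (n - k) * x ^ (n - k))
        = g k * h (n - k) * (x ^ k * x ^ (n - k)) := by ring
      _ = g k * h (n - k) * x ^ n := by rw [hxx]
  constructor
  · exact (funext key) ▸ (summable_norm_sum_mul_range_of_summable_norm hgnorm hhnorm).of_norm
  · calc ∑' n : ℕ, pmfConv g h n * x ^ n
        = ∑' n : ℕ, ∑ k ∈ Finset.range (n + 1), (g k * x ^ k) * (h (n - k) * x ^ (n - k)) :=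
          (tsum_congr key).symm
      _ = (∑' n : ℕ, g n * x ^ n) * (∑' n : ℕ, h n * x ^ n) :=
          (tsum_mul_tsum_eq_tsum_sum_range_of_summable_norm hgnorm hhnorm).symm

lemma prod_bound {β η x : ℝ} (hβ : 0 ≤ β) (hη : 0 ≤ η) (hx : 1 ≤ x)
    (hηx : η * x < 1) (hη1 : η < 1) :
    (1 + β * (x - 1) / (1 - η * x)) * (1 + β * (x⁻¹ - 1) / (1 - η * x⁻¹))
      ≤ 1 + β * ((1 + η) * (x + x⁻¹ - 2) / ((1 - η * x) * (1 - η * x⁻¹))) := by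
  have hx0 : 0 < x := lt_of_lt_of_le one_pos hx
  have hd1 : 0 < 1 - η * x := by linarith
  have hxi : x⁻¹ ≤ 1 := inv_le_one_of_one_le₀ hx
  have hxi0 : 0 < x⁻¹ := inv_pos.mpr hx0
  have hηxi : η * x⁻¹ < 1 := by nlinarith
  have hd2 : 0 < 1 - η * x⁻¹ := by linarith
  have hxη : x - η ≠ 0 := by nlinarith
  rw [mul_div_assoc β (x - 1), mul_div_assoc β (x⁻¹ - 1)]
  set u1 : ℝ := (x - 1) / (1 - η * x) with hu1def
  set u2 : ℝ := (x⁻¹ - 1) / (1 - η * x⁻¹) with hu2def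
  have hu1 : 0 ≤ u1 := div_nonneg (by linarith) hd1.le
  have hu2 : u2 ≤ 0 := div_nonpos_of_nonpos_of_nonneg (by linarith) hd2.le
  have hsum : u1 + u2 = (1 + η) * (x + x⁻¹ - 2) / ((1 - η * x) * (1 - η * x⁻¹)) := by
    rw [hu1def, hu2def]
    rw [div_add_div _ _ hd1.ne' hd2.ne']
    congr 1
    linear_combination (-2 * η) * mul_inv_cancel₀ hx0.ne'
  have hu1u2 : u1 * u2 ≤ 0 := mul_nonpos_of_nonneg_of_nonpos hu1 hu2
  calc (1 + β * u1) * (1 + β * u2) = 1 + β * (u1 + u2) + (β * β) * (u1 * u2) := by ring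
    _ ≤ 1 + β * (u1 + u2) := by nlinarith [mul_nonneg hβ hβ]
    _ = 1 + β * ((1 + η) * (x + x⁻¹ - 2) / ((1 - η * x) * (1 - η * x⁻¹))) := by rw [hsum]

set_option maxHeartbeats 1000000 in
/-- For every `u > 0` and `T > 0` there are `C < ∞` and `ε₀ ∈ (0,1]` such
that for all `ε ∈ (0,ε₀]` and `t ≤ ε^{−3}T`, the `t`-fold convolution `P_ε^t` satisfies
`∑_n P_ε^t(n) e^{uε|n − M_ε(t)|} ≤ C`, where `M_ε(t)` is the mean of `P_ε^t`. -/
theorem tiltedConvIter_exp_moment (ν α ρ : ℝ) (J : ℕ)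
    (hν0 : 0 ≤ ν) (hν1 : ν < 1) (hα : 0 < α) (hρ0 : 0 < ρ) (hρ1 : ρ < 1) (hJ : 0 < J)
    (u T : ℝ) (hu : 0 < u) (hT : 0 < T) :
    ∃ C : ℝ, ∃ ε₀ : ℝ, ε₀ ∈ Set.Ioc (0 : ℝ) 1 ∧
      ∀ ε ∈ Set.Ioc (0 : ℝ) ε₀, ∀ t : ℕ, (t : ℝ) ≤ T / ε ^ 3 →
        Summable (fun n : ℕ => tiltedConvIter ν α ρ ε J t n *
          Real.exp (u * ε *
            |(n : ℝ) - ∑' m : ℕ, (m : ℝ) * tiltedConvIter ν α ρ ε J t m|)) ∧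
        (∑' n : ℕ, tiltedConvIter ν α ρ ε J t n *
          Real.exp (u * ε *
            |(n : ℝ) - ∑' m : ℕ, (m : ℝ) * tiltedConvIter ν α ρ ε J t m|)) ≤ C := by
  have h1α : (0:ℝ) < 1 + α := by linarith
  set ηb : ℝ := ρ * ((ν + α) / (1 + α)) with hηbdef
  have hηb0 : 0 < ηb := mul_pos hρ0 (div_pos (by linarith) h1α)
  have hηb1 : ηb < 1 := by
    rw [hηbdef]
    have h2 : (ν + α) / (1 + α) < 1 := (div_lt_one h1α).mpr (by linarith)
    have h3 : 0 < (ν + α) / (1 + α) := div_pos (by linarith) h1α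
    nlinarith
  set xb : ℝ := (1 + ηb⁻¹) / 2 with hxbdef
  have hxb1 : 1 < xb := by
    have := (one_lt_inv₀ hηb0).mpr hηb1
    rw [hxbdef]; linarith
  have hηbxb : ηb * xb = (ηb + 1) / 2 := by
    rw [hxbdef]; field_simp
  set δ : ℝ := (1 - ηb) / 2 with hδdef
  have hδ0 : 0 < δ := by rw [hδdef]; linarith
  set Kb : ℝ := (1 + α) * α / δ with hKbdef
  have hKb0 : 0 < Kb := div_pos (mul_pos h1α hα) hδ0
  set Kc : ℝ := Kb * 2 * xb / δ ^ 2 with hKcdef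
  have hKc0 : 0 < Kc :=
    div_pos (mul_pos (mul_pos hKb0 two_pos) (by linarith)) (by positivity)
  set B : ℝ := 2 * Real.exp (Kc * T * u ^ 2 / 2) with hBdef
  have hB0 : 0 < B := by rw [hBdef]; positivity
  refine ⟨Real.exp (B - 1) * B, min 1 (Real.log xb / u), ⟨?_, min_le_left _ _⟩, ?_⟩
  · exact lt_min one_pos (div_pos (Real.log_pos hxb1) hu)
  intro ε hε t ht
  obtain ⟨hε0, hεle⟩ := hε
  have hε1 : ε ≤ 1 := hεle.trans (min_le_left _ _)
  have hθlog : u * ε ≤ Real.log xb := by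
    have h2 : ε ≤ Real.log xb / u := hεle.trans (min_le_right _ _)
    calc u * ε ≤ u * (Real.log xb / u) := mul_le_mul_of_nonneg_left h2 hu.le
      _ = Real.log xb := by field_simp
  set θ : ℝ := u * ε with hθdef
  have hθ0 : 0 < θ := mul_pos hu hε0
  set x : ℝ := Real.exp θ with hxdef
  have hx1 : 1 < x := by rw [hxdef]; exact Real.one_lt_exp_iff.mpr hθ0
  have hx0 : 0 < x := lt_trans one_pos hx1
  have hxxb : x ≤ xb := by
    rw [hxdef]
    calc Real.exp θ ≤ Real.exp (Real.log xb) := Real.exp_le_exp.mpr hθlog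
      _ = xb := Real.exp_log (by linarith)
  have hxinv0 : (0:ℝ) < x⁻¹ := inv_pos.mpr hx0
  have hxinv1 : x⁻¹ ≤ 1 := inv_le_one_of_one_le₀ hx1.le
  -- step parameters
  set q : ℝ := Real.exp (-ε) with hqdef
  have hq0 : 0 < q := Real.exp_pos _
  have hq1 : q ≤ 1 := Real.exp_le_one_iff.mpr (by linarith)
  have h1q : 1 - q ≤ ε := by
    have := Real.add_one_le_exp (-ε)
    rw [hqdef]; linarith
  set P : ℕ → ℕ → ℝ := tiltedConvIter ν α ρ ε J with hPdef
  set av : ℕ → ℝ := fun s => α * Real.exp (-ε * ((s % J : ℕ) : ℝ)) with havdef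
  have hav0 : ∀ s, 0 < av s := fun s => mul_pos hα (Real.exp_pos _)
  have havle : ∀ s, av s ≤ α := by
    intro s
    have h2 : Real.exp (-ε * ((s % J : ℕ) : ℝ)) ≤ 1 := by
      apply Real.exp_le_one_iff.mpr
      have h3 : (0:ℝ) ≤ ((s % J : ℕ) : ℝ) := Nat.cast_nonneg _
      nlinarith
    calc av s = α * Real.exp (-ε * ((s % J : ℕ) : ℝ)) := rfl
      _ ≤ α * 1 := mul_le_mul_of_nonneg_left h2 hα.le
      _ = α := mul_one α
  have hηs : ∀ s, ρ * ((ν + av s) / (1 + av s)) ≤ ηb := by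
    intro s
    rw [hηbdef]
    apply mul_le_mul_of_nonneg_left ?_ hρ0.le
    rw [div_le_div_iff₀ (by linarith [hav0 s]) h1α]
    nlinarith [hav0 s, havle s]
  have hηs0 : ∀ s, 0 ≤ ρ * ((ν + av s) / (1 + av s)) := fun s =>
    mul_nonneg hρ0.le (div_nonneg (by linarith [hav0 s]) (by linarith [hav0 s]))
  have hcondx : ∀ s, ρ * ((ν + av s) / (1 + av s)) * x < 1 := by
    intro s
    calc ρ * ((ν + av s) / (1 + av s)) * x ≤ ηb * xb :=
          mul_le_mul (hηs s) hxxb hx0.le hηb0.le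
      _ = (ηb + 1) / 2 := hηbxb
      _ < 1 := by linarith
  have hcondxi : ∀ s, ρ * ((ν + av s) / (1 + av s)) * x⁻¹ < 1 := by
    intro s
    have h2 : ρ * ((ν + av s) / (1 + av s)) * x⁻¹ ≤ ηb * 1 :=
      mul_le_mul (hηs s) hxinv1 hxinv0.le hηb0.le
    linarith
  have hcond1 : ∀ s, ρ * ((ν + av s) / (1 + av s)) * 1 < 1 := by
    intro s
    have h2 : ρ * ((ν + av s) / (1 + av s)) * 1 ≤ ηb * 1 :=
      mul_le_mul (hηs s) le_rfl zero_le_one hηb0.le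
    linarith
  -- per-step β data
  have hβex := fun s : ℕ => tilted_beta hq0 hq1 (hav0 s) hν0 hν1 hρ0 hρ1
  choose β hβ0 hβle hβx using hβex
  have hβKb : ∀ s, β s ≤ Kb * ε := by
    intro s
    refine (hβle s).trans ?_
    have hd : δ ≤ 1 - ρ * ((ν + av s) / (1 + av s)) := by
      have := hηs s; rw [hδdef]; linarith
    have h1q0 : (0:ℝ) ≤ 1 - q := by linarith
    have h1 := hav0 s
    have h2 := havle s
    have e1 : av s * (1 - q) ≤ α * ε := mul_le_mul h2 h1q h1q0 hα.le
    have e2 : (1 + av s) * (av s * (1 - q)) ≤ (1 + α) * (α * ε) :=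
      mul_le_mul (by linarith) e1 (mul_nonneg h1.le h1q0) (by linarith)
    have e3 : (1 + av s) * (av s * (1 - q)) * ρ ≤ (1 + α) * (α * ε) := by
      nlinarith [mul_nonneg (mul_nonneg (by linarith : (0:ℝ) ≤ 1 + av s)
        (mul_nonneg h1.le h1q0)) hρ0.le]
    calc (1 + av s) * (av s * (1 - q)) * ρ / (1 - ρ * ((ν + av s) / (1 + av s)))
        ≤ (1 + α) * (α * ε) / δ := by
          apply div_le_div₀ (by positivity) e3 hδ0 hd
      _ = Kb * ε := by rw [hKbdef]; field_simp
  -- nonnegativity of P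
  have hP0 : ∀ k n, 0 ≤ P k n := by
    intro k
    induction k with
    | zero =>
      intro n
      simp only [hPdef, tiltedConvIter]
      split <;> norm_num
    | succ k ih =>
      intro n
      exact pmfConv_nonneg ih (tilted_nonneg hq0 hq1 (hav0 k) hν0 hν1 hρ0 hρ1) n
  -- key induction: generating function of P
  have hPkey : ∀ y : ℝ, 0 < y → (∀ s, ρ * ((ν + av s) / (1 + av s)) * y < 1) → ∀ k : ℕ,
      Summable (fun n => P k n * y ^ n) ∧
      ∑' n : ℕ, P k n * y ^ n
        = ∏ s ∈ Finset.range k, (∑' n : ℕ, tiltedStepDist q (av s) ν ρ n * y ^ n) := by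
    intro y hy hcond k
    induction k with
    | zero =>
      constructor
      · apply summable_of_ne_finset_zero (s := {0})
        intro b hb
        simp only [Finset.mem_singleton] at hb
        simp [hPdef, tiltedConvIter, hb]
      · rw [tsum_eq_single 0 ?_]
        · simp [hPdef, tiltedConvIter]
        · intro b hb; simp [hPdef, tiltedConvIter, hb]
    | succ k ih =>
      have hstep := hβx k y hy (hcond k)
      have hconv := pmfConv_tsum hy.le (hP0 k)
        (tilted_nonneg hq0 hq1 (hav0 k) hν0 hν1 hρ0 hρ1) ih.1 hstep.1
      constructor
      · exact hconv.1
      · calc ∑' n : ℕ, P (k+1) n * y ^ n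
            = (∑' n : ℕ, P k n * y ^ n) * (∑' n : ℕ, tiltedStepDist q (av k) ν ρ n * y ^ n) :=
              hconv.2
          _ = ∏ s ∈ Finset.range (k+1), (∑' n : ℕ, tiltedStepDist q (av s) ν ρ n * y ^ n) := by
              rw [ih.2, Finset.prod_range_succ]
  -- mass one
  have hPts : Summable (P t) := by
    have h2 := (hPkey 1 one_pos hcond1 t).1
    simpa using h2
  have hmass : ∑' n : ℕ, P t n = 1 := by
    have h2 := (hPkey 1 one_pos hcond1 t).2
    have h3 : ∀ n : ℕ, P t n * (1:ℝ) ^ n = P t n := by intro n; simp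
    rw [tsum_congr h3] at h2
    rw [h2]
    apply Finset.prod_eq_one
    intro s _
    have h4 := (hβx s 1 one_pos (hcond1 s)).2
    rw [h4]
    simp
  -- positivity of P t 0
  have hPt0 : ∀ k, 0 < P k 0 := by
    intro k
    induction k with
    | zero => norm_num [hPdef, tiltedConvIter]
    | succ k ih =>
      have h2 : P (k+1) 0 = P k 0 * tiltedStepDist q (av k) ν ρ 0 := by
        show pmfConv (P k) (tiltedStepDist q (av k) ν ρ) 0 = _
        simp [pmfConv]
      rw [h2]
      exact mul_pos ih (tilted_pos0 hq0 hq1 (hav0 k) hν0 hν1 hρ0 hρ1)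
  -- the two generating functions
  obtain ⟨hGs, hGe⟩ := hPkey x hx0 hcondx t
  obtain ⟨hG's, hG'e⟩ := hPkey x⁻¹ hxinv0 hcondxi t
  set G : ℝ := ∑' n : ℕ, P t n * x ^ n with hGdef
  set G' : ℝ := ∑' n : ℕ, P t n * (x⁻¹) ^ n with hG'def
  have hG0 : 0 < G := by
    have h2 := Summable.le_tsum hGs 0 (fun j _ => mul_nonneg (hP0 t j) (pow_nonneg hx0.le j))
    have h3 : 0 < P t 0 * x ^ 0 := by
      rw [pow_zero, mul_one]; exact hPt0 t
    exact lt_of_lt_of_le h3 h2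
  have hG'0 : 0 < G' := by
    have h2 := Summable.le_tsum hG's 0 (fun j _ => mul_nonneg (hP0 t j) (pow_nonneg hxinv0.le j))
    have h3 : 0 < P t 0 * (x⁻¹) ^ 0 := by
      rw [pow_zero, mul_one]; exact hPt0 t
    exact lt_of_lt_of_le h3 h2
  -- product bound on G * G'
  have hxθ : x - 1 ≤ θ * x := by
    have h5 := Real.add_one_le_exp (-θ)
    have hxx : x * Real.exp (-θ) = 1 := by
      rw [hxdef, ← Real.exp_add]; simp
    have h6 : x * (-θ + 1) ≤ x * Real.exp (-θ) :=
      mul_le_mul_of_nonneg_left (by linarith) hx0.le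
    rw [hxx] at h6
    linarith
  have hxsum0 : 0 ≤ x + x⁻¹ - 2 := by
    have h6 : x + x⁻¹ - 2 = (x - 1) ^ 2 * x⁻¹ := by field_simp; ring
    rw [h6]; positivity
  have hxsum : x + x⁻¹ - 2 ≤ θ ^ 2 * xb := by
    have h6 : x + x⁻¹ - 2 = (x - 1) ^ 2 * x⁻¹ := by field_simp; ring
    have h7 : (x - 1) ^ 2 ≤ (θ * x) ^ 2 := pow_le_pow_left₀ (by linarith) hxθ 2
    calc x + x⁻¹ - 2 = (x - 1) ^ 2 * x⁻¹ := h6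
      _ ≤ (θ * x) ^ 2 * x⁻¹ := mul_le_mul_of_nonneg_right h7 hxinv0.le
      _ = θ ^ 2 * x := by field_simp
      _ ≤ θ ^ 2 * xb := mul_le_mul_of_nonneg_left hxxb (by positivity)
  have hGG' : G * G' ≤ Real.exp (Kc * T * u ^ 2) := by
    have hper : ∀ s ∈ Finset.range t,
        (∑' n : ℕ, tiltedStepDist q (av s) ν ρ n * x ^ n) *
        (∑' n : ℕ, tiltedStepDist q (av s) ν ρ n * (x⁻¹) ^ n) ≤ Real.exp (Kc * ε * θ ^ 2) := by
      intro s _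
      have hcx := hcondx s
      have hcxi := hcondxi s
      have hηs1 : ρ * ((ν + av s) / (1 + av s)) < 1 := lt_of_le_of_lt (hηs s) hηb1
      have hxeq := (hβx s x hx0 hcx).2
      have hxieq := (hβx s x⁻¹ hxinv0 hcxi).2
      rw [hxeq, hxieq]
      refine le_trans (prod_bound (hβ0 s) (hηs0 s) hx1.le hcx hηs1) ?_
      set ηs : ℝ := ρ * ((ν + av s) / (1 + av s)) with hηsdef
      have hd1 : δ ≤ 1 - ηs * x := by
        have h8 : ηs * x ≤ ηb * xb := mul_le_mul (hηs s) hxxb hx0.le hηb0.le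
        rw [hηbxb] at h8
        rw [hδdef]; linarith
      have hd2 : δ ≤ 1 - ηs * x⁻¹ := by
        have h8 : ηs * x⁻¹ ≤ ηb * 1 := mul_le_mul (hηs s) hxinv1 hxinv0.le hηb0.le
        rw [hδdef]; linarith
      have hQnum : (1 + ηs) * (x + x⁻¹ - 2) ≤ 2 * (θ ^ 2 * xb) := by
        have h8 : (1 + ηs) * (x + x⁻¹ - 2) ≤ 2 * (x + x⁻¹ - 2) :=
          mul_le_mul_of_nonneg_right (by linarith) hxsum0
        linarith [hxsum]
      have hQ : (1 + ηs) * (x + x⁻¹ - 2) / ((1 - ηs * x) * (1 - ηs * x⁻¹))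
          ≤ 2 * (θ ^ 2 * xb) / (δ * δ) :=
        div_le_div₀ (mul_nonneg (by norm_num) (mul_nonneg (sq_nonneg θ) (by linarith)))
          hQnum (mul_pos hδ0 hδ0) (mul_le_mul hd1 hd2 hδ0.le (by linarith))
      have hQ0 : 0 ≤ (1 + ηs) * (x + x⁻¹ - 2) / ((1 - ηs * x) * (1 - ηs * x⁻¹)) := by
        apply div_nonneg (mul_nonneg (by linarith [hηs0 s]) hxsum0)
        apply mul_nonneg <;> linarith
      have hb2 : β s * ((1 + ηs) * (x + x⁻¹ - 2) / ((1 - ηs * x) * (1 - ηs * x⁻¹)))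
          ≤ (Kb * ε) * (2 * (θ ^ 2 * xb) / (δ * δ)) :=
        mul_le_mul (hβKb s) hQ hQ0 (by positivity)
      have hb3 : (Kb * ε) * (2 * (θ ^ 2 * xb) / (δ * δ)) = Kc * ε * θ ^ 2 := by
        rw [hKcdef]; field_simp
      have hb4 := Real.add_one_le_exp (Kc * ε * θ ^ 2)
      linarith
    have hFnnx : ∀ s, 0 ≤ ∑' n : ℕ, tiltedStepDist q (av s) ν ρ n * x ^ n := fun s =>
      tsum_nonneg fun n => mul_nonneg (tilted_nonneg hq0 hq1 (hav0 s) hν0 hν1 hρ0 hρ1 n)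
        (pow_nonneg hx0.le n)
    have hFnnxi : ∀ s, 0 ≤ ∑' n : ℕ, tiltedStepDist q (av s) ν ρ n * (x⁻¹) ^ n := fun s =>
      tsum_nonneg fun n => mul_nonneg (tilted_nonneg hq0 hq1 (hav0 s) hν0 hν1 hρ0 hρ1 n)
        (pow_nonneg hxinv0.le n)
    have htε : (t:ℝ) * ε ^ 3 ≤ T := by
      rw [le_div_iff₀ (by positivity)] at ht
      exact ht
    calc G * G' = ∏ s ∈ Finset.range t,
          ((∑' n : ℕ, tiltedStepDist q (av s) ν ρ n * x ^ n) *
           (∑' n : ℕ, tiltedStepDist q (av s) ν ρ n * (x⁻¹) ^ n)) := by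
          rw [hGe, hG'e, ← Finset.prod_mul_distrib]
      _ ≤ ∏ _s ∈ Finset.range t, Real.exp (Kc * ε * θ ^ 2) :=
          Finset.prod_le_prod (fun s _ => mul_nonneg (hFnnx s) (hFnnxi s)) hper
      _ = Real.exp (Kc * ε * θ ^ 2) ^ t := by
          rw [Finset.prod_const, Finset.card_range]
      _ = Real.exp ((t:ℝ) * (Kc * ε * θ ^ 2)) := (Real.exp_nat_mul _ t).symm
      _ ≤ Real.exp (Kc * T * u ^ 2) := by
          apply Real.exp_le_exp.mpr
          have e4 : (t:ℝ) * (Kc * ε * θ ^ 2) = Kc * u ^ 2 * ((t:ℝ) * ε ^ 3) := by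
            rw [hθdef]; ring
          rw [e4]
          calc Kc * u ^ 2 * ((t:ℝ) * ε ^ 3) ≤ Kc * u ^ 2 * T :=
              mul_le_mul_of_nonneg_left htε (by positivity)
            _ = Kc * T * u ^ 2 := by ring
  -- centering constant
  set A : ℝ := (Real.log G - Real.log G') / (2 * θ) with hAdef
  set R : ℝ := Real.exp ((Real.log G + Real.log G') / 2) with hRdef
  have hR0 : 0 < R := Real.exp_pos _
  have hEG : Real.exp (-(θ * A)) * G = R := by
    have e5 : -(θ * A) + Real.log G = (Real.log G + Real.log G') / 2 := by
      rw [hAdef]; field_simp; ring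
    calc Real.exp (-(θ * A)) * G = Real.exp (-(θ * A) + Real.log G) := by
          rw [Real.exp_add, Real.exp_log hG0]
      _ = R := by rw [e5]
  have hEG' : Real.exp (θ * A) * G' = R := by
    have e5 : θ * A + Real.log G' = (Real.log G + Real.log G') / 2 := by
      rw [hAdef]; field_simp; ring
    calc Real.exp (θ * A) * G' = Real.exp (θ * A + Real.log G') := by
          rw [Real.exp_add, Real.exp_log hG'0]
      _ = R := by rw [e5]
  have hRB : 2 * R ≤ B := by
    have h8 : R * R = G * G' := by
      rw [hRdef, ← Real.exp_add,
        show (Real.log G + Real.log G') / 2 + (Real.log G + Real.log G') / 2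
          = Real.log G + Real.log G' from by ring,
        Real.exp_add, Real.exp_log hG0, Real.exp_log hG'0]
    have h9 : Real.exp (Kc * T * u ^ 2)
        = Real.exp (Kc * T * u ^ 2 / 2) * Real.exp (Kc * T * u ^ 2 / 2) := by
      rw [← Real.exp_add]; ring_nf
    have h10 : R * R ≤ Real.exp (Kc * T * u ^ 2 / 2) * Real.exp (Kc * T * u ^ 2 / 2) := by
      rw [h8, ← h9]; exact hGG'
    have h11 : R ≤ Real.exp (Kc * T * u ^ 2 / 2) := by
      by_contra hcon
      push_neg at hcon
      have h12 := mul_lt_mul'' hcon hcon (Real.exp_pos _).le (Real.exp_pos _).le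
      linarith
    rw [hBdef]; linarith
  -- the comparison function W
  set W : ℕ → ℝ := fun n =>
    P t n * (Real.exp (θ * ((n:ℝ) - A)) + Real.exp (-(θ * ((n:ℝ) - A)))) with hWdef
  have hxn : ∀ n : ℕ, x ^ n = Real.exp (θ * (n:ℝ)) := by
    intro n
    rw [hxdef, ← Real.exp_nat_mul, mul_comm]
  have hxin : ∀ n : ℕ, (x⁻¹) ^ n = Real.exp (-(θ * (n:ℝ))) := by
    intro n
    rw [hxdef, ← Real.exp_neg, ← Real.exp_nat_mul]
    ring_nf
  have hWeq : ∀ n, W n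
      = Real.exp (-(θ * A)) * (P t n * x ^ n) + Real.exp (θ * A) * (P t n * (x⁻¹) ^ n) := by
    intro n
    have e1 : Real.exp (θ * ((n:ℝ) - A)) = Real.exp (-(θ * A)) * Real.exp (θ * (n:ℝ)) := by
      rw [← Real.exp_add]; congr 1; ring
    have e2 : Real.exp (-(θ * ((n:ℝ) - A))) = Real.exp (θ * A) * Real.exp (-(θ * (n:ℝ))) := by
      rw [← Real.exp_add]; congr 1; ring
    rw [hWdef]
    simp only []
    rw [e1, e2, ← hxn n, ← hxin n]
    ring
  have hWsum : Summable W :=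
    Summable.congr ((hGs.mul_left (Real.exp (-(θ * A)))).add
      (hG's.mul_left (Real.exp (θ * A)))) (fun n => (hWeq n).symm)
  have hWts : ∑' n, W n = 2 * R := by
    rw [tsum_congr hWeq,
      Summable.tsum_add (hGs.mul_left (Real.exp (-(θ * A)))) (hG's.mul_left (Real.exp (θ * A))),
      tsum_mul_left, tsum_mul_left, ← hGdef, ← hG'def, hEG, hEG']
    ring
  have hWnn : ∀ n, 0 ≤ W n := fun n => mul_nonneg (hP0 t n) (by positivity)
  -- summability of absolute moments
  have habs_sum : Summable (fun n => P t n * |(n:ℝ) - A|) := by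
    apply Summable.of_nonneg_of_le (fun n => mul_nonneg (hP0 t n) (abs_nonneg _)) ?_
      (hWsum.mul_left (1/θ))
    intro n
    have h9 : θ * |(n:ℝ) - A| ≤ Real.exp (θ * ((n:ℝ) - A)) + Real.exp (-(θ * ((n:ℝ) - A))) := by
      rcases abs_cases ((n:ℝ) - A) with ⟨he, _⟩ | ⟨he, _⟩ <;> rw [he]
      · linarith [Real.add_one_le_exp (θ * ((n:ℝ) - A)),
          (Real.exp_pos (-(θ * ((n:ℝ) - A)))).le]
      · linarith [Real.add_one_le_exp (-(θ * ((n:ℝ) - A))),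
          (Real.exp_pos (θ * ((n:ℝ) - A))).le]
    calc P t n * |(n:ℝ) - A| = (1/θ) * (P t n * (θ * |(n:ℝ) - A|)) := by
          field_simp
      _ ≤ (1/θ) * W n := by
          apply mul_le_mul_of_nonneg_left ?_ (by positivity)
          exact mul_le_mul_of_nonneg_left h9 (hP0 t n)
  have hMs : Summable (fun n : ℕ => (n:ℝ) * P t n) := by
    apply Summable.of_nonneg_of_le (fun n => mul_nonneg (Nat.cast_nonneg n) (hP0 t n)) ?_
      (hGs.mul_left (1/θ))
    intro n
    have h11 : θ * (n:ℝ) ≤ x ^ n := by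
      have h12 := Real.add_one_le_exp (θ * (n:ℝ))
      rw [hxn n]; linarith
    calc (n:ℝ) * P t n = (1/θ) * (θ * (n:ℝ) * P t n) := by field_simp
      _ ≤ (1/θ) * (P t n * x ^ n) := by
          apply mul_le_mul_of_nonneg_left ?_ (by positivity)
          calc θ * (n:ℝ) * P t n ≤ x ^ n * P t n :=
              mul_le_mul_of_nonneg_right h11 (hP0 t n)
            _ = P t n * x ^ n := by ring
  set M : ℝ := ∑' m : ℕ, (m:ℝ) * P t m with hMdef
  have hMA : |M - A| ≤ ∑' n, P t n * |(n:ℝ) - A| := by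
    have e3 : ∑' n : ℕ, ((n:ℝ) * P t n - A * P t n)
        = (∑' n : ℕ, (n:ℝ) * P t n) - ∑' n : ℕ, A * P t n := Summable.tsum_sub hMs (hPts.mul_left A)
    have h12 : M - A = ∑' n : ℕ, ((n:ℝ) * P t n - A * P t n) := by
      rw [e3, tsum_mul_left, hmass, mul_one, ← hMdef]
    rw [h12]
    have habs2 : Summable (fun n : ℕ => |(n:ℝ) * P t n - A * P t n|) := by
      apply Summable.congr habs_sum
      intro n
      rw [show (n:ℝ) * P t n - A * P t n = ((n:ℝ) - A) * P t n from by ring, abs_mul,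
        abs_of_nonneg (hP0 t n)]
      ring
    have habs3 : Summable (fun n : ℕ => ‖(n:ℝ) * P t n - A * P t n‖) := by
      simpa only [Real.norm_eq_abs] using habs2
    have h21 := norm_tsum_le_tsum_norm habs3
    calc |∑' n : ℕ, ((n:ℝ) * P t n - A * P t n)|
        ≤ ∑' n : ℕ, |(n:ℝ) * P t n - A * P t n| := by
          simpa only [Real.norm_eq_abs] using h21
      _ = ∑' n, P t n * |(n:ℝ) - A| := by
          apply tsum_congr
          intro n
          rw [show (n:ℝ) * P t n - A * P t n = ((n:ℝ) - A) * P t n from by ring, abs_mul,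
            abs_of_nonneg (hP0 t n)]
          ring
  have hθMA : θ * |M - A| ≤ 2 * R - 1 := by
    have h13 : ∑' n, (P t n + θ * (P t n * |(n:ℝ) - A|)) ≤ ∑' n, W n := by
      apply Summable.tsum_le_tsum ?_ (hPts.add (habs_sum.mul_left θ)) hWsum
      intro n
      have h14 : 1 + θ * |(n:ℝ) - A|
          ≤ Real.exp (θ * ((n:ℝ) - A)) + Real.exp (-(θ * ((n:ℝ) - A))) := by
        rcases abs_cases ((n:ℝ) - A) with ⟨he, _⟩ | ⟨he, _⟩ <;> rw [he]
        · linarith [Real.add_one_le_exp (θ * ((n:ℝ) - A)),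
            (Real.exp_pos (-(θ * ((n:ℝ) - A)))).le]
        · linarith [Real.add_one_le_exp (-(θ * ((n:ℝ) - A))),
            (Real.exp_pos (θ * ((n:ℝ) - A))).le]
      calc P t n + θ * (P t n * |(n:ℝ) - A|) = P t n * (1 + θ * |(n:ℝ) - A|) := by ring
        _ ≤ W n := mul_le_mul_of_nonneg_left h14 (hP0 t n)
    have h15 : ∑' n, (P t n + θ * (P t n * |(n:ℝ) - A|))
        = 1 + θ * ∑' n, P t n * |(n:ℝ) - A| := by
      rw [Summable.tsum_add hPts (habs_sum.mul_left θ), hmass, tsum_mul_left]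
    rw [h15, hWts] at h13
    have h16 : θ * |M - A| ≤ θ * ∑' n, P t n * |(n:ℝ) - A| :=
      mul_le_mul_of_nonneg_left hMA hθ0.le
    linarith
  -- final pointwise bound
  have hpoint : ∀ n : ℕ, P t n * Real.exp (θ * |(n:ℝ) - M|)
      ≤ Real.exp (θ * |M - A|) * W n := by
    intro n
    have htri : |(n:ℝ) - M| ≤ |(n:ℝ) - A| + |M - A| := by
      calc |(n:ℝ) - M| ≤ |(n:ℝ) - A| + |A - M| := abs_sub_le _ _ _
        _ = |(n:ℝ) - A| + |M - A| := by rw [abs_sub_comm A M]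
    have h17 : θ * |(n:ℝ) - M| ≤ θ * |(n:ℝ) - A| + θ * |M - A| := by
      have := mul_le_mul_of_nonneg_left htri hθ0.le
      linarith [this]
    have h18 : Real.exp (θ * |(n:ℝ) - A|)
        ≤ Real.exp (θ * ((n:ℝ) - A)) + Real.exp (-(θ * ((n:ℝ) - A))) := by
      rcases abs_cases ((n:ℝ) - A) with ⟨he, _⟩ | ⟨he, _⟩ <;> rw [he]
      · linarith [(Real.exp_pos (-(θ * ((n:ℝ) - A)))).le]
      · rw [show θ * -((n:ℝ) - A) = -(θ * ((n:ℝ) - A)) from by ring]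
        linarith [(Real.exp_pos (θ * ((n:ℝ) - A))).le]
    calc P t n * Real.exp (θ * |(n:ℝ) - M|)
        ≤ P t n * (Real.exp (θ * |(n:ℝ) - A|) * Real.exp (θ * |M - A|)) := by
          apply mul_le_mul_of_nonneg_left ?_ (hP0 t n)
          rw [← Real.exp_add]
          exact Real.exp_le_exp.mpr h17
      _ = Real.exp (θ * |M - A|) * (P t n * Real.exp (θ * |(n:ℝ) - A|)) := by ring
      _ ≤ Real.exp (θ * |M - A|) * W n := by
          apply mul_le_mul_of_nonneg_left ?_ (Real.exp_pos _).le
          exact mul_le_mul_of_nonneg_left h18 (hP0 t n)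
  constructor
  · exact Summable.of_nonneg_of_le
      (fun n => mul_nonneg (hP0 t n) (Real.exp_pos _).le) hpoint
      (hWsum.mul_left (Real.exp (θ * |M - A|)))
  · calc ∑' n : ℕ, P t n * Real.exp (θ * |(n:ℝ) - M|)
        ≤ ∑' n : ℕ, Real.exp (θ * |M - A|) * W n := by
          apply Summable.tsum_le_tsum hpoint ?_ (hWsum.mul_left (Real.exp (θ * |M - A|)))
          exact Summable.of_nonneg_of_le
            (fun n => mul_nonneg (hP0 t n) (Real.exp_pos _).le) hpoint
            (hWsum.mul_left (Real.exp (θ * |M - A|)))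
      _ = Real.exp (θ * |M - A|) * (2 * R) := by rw [tsum_mul_left, hWts]
      _ ≤ Real.exp (2 * R - 1) * (2 * R) := by
          apply mul_le_mul_of_nonneg_right (Real.exp_le_exp.mpr hθMA) (by positivity)
      _ ≤ Real.exp (B - 1) * B := by
          have h19 : Real.exp (2 * R - 1) ≤ Real.exp (B - 1) :=
            Real.exp_le_exp.mpr (by linarith)
          have h20 : Real.exp (2 * R - 1) * (2 * R) ≤ Real.exp (B - 1) * (2 * R) :=
            mul_le_mul_of_nonneg_right h19 (by positivity)
          have h21 : Real.exp (B - 1) * (2 * R) ≤ Real.exp (B - 1) * B :=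
            mul_le_mul_of_nonneg_left hRB (Real.exp_pos _).le
          linarith
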